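/- Let 𝒳 = {X_1, …, X_t} be a finite set of events in a probability space with a negative dependency graph D = (𝒳, E), and suppose 𝒳 is partitioned into two types, 𝒳 = 𝒳_1 ⊔ 𝒳_2. Suppose there are integers ℓ_1, ℓ_2 and, for each s ∈ {1,2}, each j ∈ [ℓ_s] and each s' ∈ {1,2}, positive integers q_{s,j,s'}, such that for each s ∈ {1,2} and each X_i ∈ 𝒳_s the closed neighbourhood can be written as Γ_D*(X_i) = ⋃_{j∈[ℓ_s]} (Q_{i,j}^{(1)} ∪ Q_{i,j}^{(2)}), where Q_{i,j}^{(s')} ⊆ 𝒳_{s'}, |Q_{i,j}^{(s')}| ≤ q_{s,j,s'}, and Q_{i,j}^{(1)} ∪ Q_{i,j}^{(2)} is a clique in D. If there are positive real numbers μ_1, μ_2 such that for each s ∈ {1,2} and each X_i ∈ 𝒳_s one has P(X_i) ≤ μ_s / ∏_{j∈[ℓ_s]} (1 + μ_1·q_{s,j,1} + μ_2·q_{s,j,2}), then P(⋂_{i∈[t]} X_iᶜ) > 0. -/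

import Mathlib

open MeasureTheory

/-- `D` is a negative dependency graph for the events `X i` with respect to `μ`. -/
def IsNegDepGraph {Ω : Type*} [MeasurableSpace Ω] (μ : Measure Ω) {t : ℕ}
    (X : Fin t → Set Ω) (D : SimpleGraph (Fin t)) : Prop :=
  ∀ (i : Fin t) (Z : Finset (Fin t)), (∀ j ∈ Z, j ≠ i ∧ ¬ D.Adj i j) →
    μ (X i ∩ ⋂ j ∈ Z, (X j)ᶜ) ≤ μ (X i) * μ (⋂ j ∈ Z, (X j)ᶜ)

open Finset
set_option linter.unusedSectionVars false

section Phi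
variable {V : Type*} [Fintype V] [DecidableEq V] (D : SimpleGraph V) [DecidableRel D.Adj] (W : V → ℝ)

/-- independent subsets -/
def IndepSet (S : Finset V) : Prop := ∀ a ∈ S, ∀ b ∈ S, ¬ D.Adj a b

instance (S : Finset V) : Decidable (IndepSet D S) := by
  unfold IndepSet; infer_instance

def phi (Y : Finset V) : ℝ :=
  ∑ S ∈ Y.powerset.filter (fun S => IndepSet D S), ∏ y ∈ S, W y

variable (hW : ∀ v, 0 < W v)
include hW

lemma prodW_nonneg (S : Finset V) : 0 ≤ ∏ y ∈ S, W y :=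
  Finset.prod_nonneg (fun y _ => (hW y).le)

lemma phi_mono {Y Y' : Finset V} (h : Y ⊆ Y') : phi D W Y ≤ phi D W Y' := by
  apply Finset.sum_le_sum_of_subset_of_nonneg
  · intro S hS
    simp only [mem_filter, mem_powerset] at hS ⊢
    exact ⟨hS.1.trans h, hS.2⟩
  · intro S _ _; exact prodW_nonneg W hW S

lemma one_le_phi (Y : Finset V) : 1 ≤ phi D W Y := by
  have h : (∅ : Finset V) ∈ Y.powerset.filter (fun S => IndepSet D S) := by
    exact Finset.mem_filter.mpr ⟨Finset.empty_mem_powerset _, fun a ha => by simp at ha⟩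
  calc (1:ℝ) = ∏ y ∈ (∅ : Finset V), W y := by simp
  _ ≤ _ := Finset.single_le_sum (fun S _ => prodW_nonneg W hW S) h

lemma phi_pos (Y : Finset V) : 0 < phi D W Y :=
  lt_of_lt_of_le one_pos (one_le_phi D W hW Y)

lemma add_le_phi {Y : Finset V} {y : V} (hy : y ∈ Y) : 1 + W y ≤ phi D W Y := by
  have hsub : ({∅, {y}} : Finset (Finset V)) ⊆ Y.powerset.filter (fun S => IndepSet D S) := by
    intro S hS
    simp only [mem_insert, mem_singleton] at hS
    rcases hS with rfl | rfl
    · exact Finset.mem_filter.mpr ⟨Finset.empty_mem_powerset _, fun a ha => by simp at ha⟩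
    · simp only [mem_filter, mem_powerset]
      refine ⟨by simpa using hy, ?_⟩
      intro a ha b hb
      simp only [mem_singleton] at ha hb
      subst ha; subst hb; simp
  calc 1 + W y = ∑ S ∈ ({∅, {y}} : Finset (Finset V)), ∏ z ∈ S, W z := by
        rw [Finset.sum_pair (Ne.symm (Finset.singleton_ne_empty y))]; simp
  _ ≤ _ := Finset.sum_le_sum_of_subset_of_nonneg hsub (fun S _ _ => prodW_nonneg W hW S)

end Phi

section Phi2
variable {V : Type*} [Fintype V] [DecidableEq V] (D : SimpleGraph V) [DecidableRel D.Adj] (W : V → ℝ)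

lemma IndepSet.subset {S S' : Finset V} (h : IndepSet D S) (hsub : S' ⊆ S) :
    IndepSet D S' := fun a ha b hb => h a (hsub ha) b (hsub hb)

lemma phi_del {Y : Finset V} {y : V} (hy : y ∈ Y) :
    phi D W Y = phi D W (Y.erase y)
      + W y * phi D W (Y \ insert y (D.neighborFinset y)) := by
  classical
  rw [phi, ← Finset.sum_filter_add_sum_filter_not
    (Y.powerset.filter (fun S => IndepSet D S)) (fun S => y ∉ S)]
  have h1 : (Y.powerset.filter (fun S => IndepSet D S)).filter (fun S => y ∉ S)
      = (Y.erase y).powerset.filter (fun S => IndepSet D S) := by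
    ext S
    simp only [mem_filter, mem_powerset, Finset.subset_erase]
    tauto
  have h2 : ∑ S ∈ (Y.powerset.filter (fun S => IndepSet D S)).filter (fun S => ¬ y ∉ S),
        ∏ z ∈ S, W z
      = W y * phi D W (Y \ insert y (D.neighborFinset y)) := by
    rw [phi, Finset.mul_sum]
    refine Finset.sum_bij' (fun S _ => S.erase y) (fun S' _ => insert y S') ?_ ?_ ?_ ?_ ?_
    · intro S hS
      simp only [mem_filter, mem_powerset, not_not] at hS
      obtain ⟨⟨hSY, hind⟩, hyS⟩ := hS
      simp only [mem_filter, mem_powerset]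
      constructor
      · intro z hz
        have hzS := Finset.mem_of_mem_erase hz
        have hzy := Finset.ne_of_mem_erase hz
        simp only [Finset.mem_sdiff, Finset.mem_insert, SimpleGraph.mem_neighborFinset]
        exact ⟨hSY hzS, by push_neg; exact ⟨hzy, hind y hyS z hzS⟩⟩
      · exact IndepSet.subset D hind (Finset.erase_subset _ _)
    · intro S' hS'
      simp only [mem_filter, mem_powerset] at hS'
      obtain ⟨hS'Y, hind⟩ := hS'
      have hyns : y ∉ S' := by
        intro h
        have := hS'Y h
        simp at this
      simp only [mem_filter, mem_powerset, not_not]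
      refine ⟨⟨Finset.insert_subset hy (fun z hz => (Finset.mem_sdiff.mp (hS'Y hz)).1), ?_⟩,
        Finset.mem_insert_self _ _⟩
      intro a ha b hb
      rcases Finset.mem_insert.mp ha with rfl | ha' <;>
        rcases Finset.mem_insert.mp hb with rfl | hb'
      · simp
      · have := hS'Y hb'
        simp only [Finset.mem_sdiff, Finset.mem_insert, SimpleGraph.mem_neighborFinset] at this
        push_neg at this
        exact this.2.2
      · have := hS'Y ha'
        simp only [Finset.mem_sdiff, Finset.mem_insert, SimpleGraph.mem_neighborFinset] at this
        push_neg at this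
        exact fun hadj => this.2.2 hadj.symm
      · exact hind a ha' b hb'
    · intro S hS
      simp only [mem_filter, not_not] at hS
      exact Finset.insert_erase hS.2
    · intro S' hS'
      simp only [mem_filter, mem_powerset] at hS'
      have hyns : y ∉ S' := by
        intro h
        have := hS'.1 h
        simp at this
      exact Finset.erase_insert hyns
    · intro S hS
      simp only [mem_filter, not_not] at hS
      exact (Finset.mul_prod_erase S W hS.2).symm
  rw [h1, h2]
  rfl

lemma phi_subadd (hW : ∀ v, 0 < W v) (Y B : Finset V) :
    phi D W Y ≤ phi D W (Y \ B) * phi D W (Y ∩ B) := by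
  classical
  have hprod : ∀ S : Finset V, ∏ z ∈ S, W z = (∏ z ∈ S \ B, W z) * ∏ z ∈ S ∩ B, W z := by
    intro S
    rw [← Finset.prod_union (Finset.sdiff_disjoint.mono_right Finset.inter_subset_right),
      Finset.sdiff_union_inter]
  have hinj : Set.InjOn (fun S : Finset V => (S \ B, S ∩ B))
      ↑(Y.powerset.filter (fun S => IndepSet D S)) := by
    intro S hS S' hS' h
    simp only [Prod.mk.injEq] at h
    rw [← Finset.sdiff_union_inter S B, ← Finset.sdiff_union_inter S' B, h.1, h.2]
  calc phi D W Y = ∑ S ∈ Y.powerset.filter (fun S => IndepSet D S),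
        ((∏ z ∈ S \ B, W z) * ∏ z ∈ S ∩ B, W z) := Finset.sum_congr rfl (fun S _ => hprod S)
    _ = ∑ p ∈ (Y.powerset.filter (fun S => IndepSet D S)).image
          (fun S => (S \ B, S ∩ B)), ((∏ z ∈ p.1, W z) * ∏ z ∈ p.2, W z) := by
        rw [Finset.sum_image (fun S hS S' hS' h => hinj hS hS' h)]
    _ ≤ ∑ p ∈ ((Y \ B).powerset.filter (fun S => IndepSet D S)) ×ˢ
          ((Y ∩ B).powerset.filter (fun S => IndepSet D S)),
          ((∏ z ∈ p.1, W z) * ∏ z ∈ p.2, W z) := by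
        apply Finset.sum_le_sum_of_subset_of_nonneg
        · intro p hp
          simp only [Finset.mem_image] at hp
          obtain ⟨S, hS, rfl⟩ := hp
          simp only [mem_filter, mem_powerset] at hS
          simp only [Finset.mem_product, mem_filter, mem_powerset]
          exact ⟨⟨Finset.sdiff_subset_sdiff hS.1 Finset.Subset.rfl,
              IndepSet.subset D hS.2 Finset.sdiff_subset⟩,
            ⟨Finset.inter_subset_inter hS.1 Finset.Subset.rfl,
              IndepSet.subset D hS.2 Finset.inter_subset_left⟩⟩
        · intro p _ _
          exact mul_nonneg (prodW_nonneg W hW _) (prodW_nonneg W hW _)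
    _ = _ := by rw [Finset.sum_product]; rw [phi, phi, Finset.sum_mul]
                exact Finset.sum_congr rfl (fun S _ => by rw [Finset.mul_sum])

end Phi2

section Phi3
variable {V : Type*} [Fintype V] [DecidableEq V] (D : SimpleGraph V) [DecidableRel D.Adj]
  (W : V → ℝ) (hW : ∀ v, 0 < W v)
include hW

lemma phi_clique {C : Finset V} (hC : D.IsClique (C : Set V)) :
    phi D W C ≤ 1 + ∑ y ∈ C, W y := by
  classical
  have hsub : C.powerset.filter (fun S => IndepSet D S)
      ⊆ insert ∅ (C.image (fun y => ({y} : Finset V))) := by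
    intro S hS
    simp only [mem_filter, mem_powerset] at hS
    obtain ⟨hSC, hind⟩ := hS
    rcases Finset.eq_empty_or_nonempty S with rfl | ⟨a, ha⟩
    · exact Finset.mem_insert_self _ _
    · have : S = {a} := by
        apply Finset.eq_singleton_iff_unique_mem.mpr
        refine ⟨ha, fun b hb => ?_⟩
        by_contra hne
        exact hind b hb a ha (hC (hSC hb) (hSC ha) hne)
      subst this
      exact Finset.mem_insert_of_mem (Finset.mem_image_of_mem _ (hSC ha))
  have hcalc : ∑ S ∈ insert ∅ (C.image (fun y => ({y} : Finset V))), ∏ z ∈ S, W z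
      = 1 + ∑ y ∈ C, W y := by
    rw [Finset.sum_insert (by
      simp only [Finset.mem_image, not_exists]
      rintro y ⟨_, h⟩
      exact Finset.singleton_ne_empty y h)]
    rw [Finset.sum_image (fun a _ b _ h => Finset.singleton_injective h)]
    simp
  calc phi D W C ≤ ∑ S ∈ insert ∅ (C.image (fun y => ({y} : Finset V))), ∏ z ∈ S, W z :=
        Finset.sum_le_sum_of_subset_of_nonneg hsub (fun S _ _ => prodW_nonneg W hW S)
    _ = _ := hcalc

lemma phi_biUnion {ι : Type*} [DecidableEq ι] (J : Finset ι) (B : ι → Finset V) :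
    phi D W (J.biUnion B) ≤ ∏ j ∈ J, phi D W (B j) := by
  classical
  induction J using Finset.cons_induction with
  | empty =>
    simp only [Finset.biUnion_empty, Finset.prod_empty, phi]
    rw [Finset.powerset_empty, Finset.filter_singleton]
    simp [IndepSet]
  | cons a J' ha ih =>
    rw [Finset.cons_eq_insert, Finset.biUnion_insert, Finset.prod_insert ha]
    calc phi D W (B a ∪ J'.biUnion B)
        ≤ phi D W ((B a ∪ J'.biUnion B) \ (B a)) * phi D W ((B a ∪ J'.biUnion B) ∩ (B a)) :=
          phi_subadd D W hW _ _
      _ ≤ phi D W (J'.biUnion B) * phi D W (B a) := by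
          apply mul_le_mul
          · exact phi_mono D W hW (by
              intro z hz
              simp only [Finset.mem_sdiff, Finset.mem_union] at hz
              rcases hz.1 with h | h
              · exact absurd h hz.2
              · exact h)
          · exact phi_mono D W hW Finset.inter_subset_right
          · exact (phi_pos D W hW _).le
          · exact (phi_pos D W hW _).le
      _ ≤ phi D W (B a) * ∏ j ∈ J', phi D W (B j) := by
          rw [mul_comm]
          exact mul_le_mul_of_nonneg_left ih (phi_pos D W hW _).le

end Phi3

open MeasureTheory

section Meas
variable {Ω : Type*} [MeasurableSpace Ω] (μ : Measure Ω) {t : ℕ} (X : Fin t → Set Ω)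

/-- probability of no event in `Z` occurring -/
def PP (Z : Finset (Fin t)) : ℝ := (μ (⋂ j ∈ Z, (X j)ᶜ)).toReal

/-- probability of `X i` and no event in `Z` -/
def MR (i : Fin t) (Z : Finset (Fin t)) : ℝ := (μ (X i ∩ ⋂ j ∈ Z, (X j)ᶜ)).toReal

lemma PP_nonneg (Z : Finset (Fin t)) : 0 ≤ PP μ X Z := ENNReal.toReal_nonneg

lemma MR_nonneg (i : Fin t) (Z : Finset (Fin t)) : 0 ≤ MR μ X i Z := ENNReal.toReal_nonneg

lemma PP_insert [IsFiniteMeasure μ] (hmeas : ∀ i, MeasurableSet (X i))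
    (a : Fin t) (Z : Finset (Fin t)) :
    PP μ X (insert a Z) = PP μ X Z - MR μ X a Z := by
  have hset : ⋂ j ∈ insert a Z, (X j)ᶜ = (⋂ j ∈ Z, (X j)ᶜ) \ X a := by
    rw [Finset.set_biInter_insert]
    ext x
    simp only [Set.mem_inter_iff, Set.mem_compl_iff, Set.mem_diff]
    tauto
  have h := measure_inter_add_diff (⋂ j ∈ Z, (X j)ᶜ) (hmeas a) (μ := μ)
  have h' := congrArg ENNReal.toReal h
  rw [ENNReal.toReal_add (measure_ne_top μ _) (measure_ne_top μ _)] at h'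
  have hcomm : X a ∩ ⋂ j ∈ Z, (X j)ᶜ = (⋂ j ∈ Z, (X j)ᶜ) ∩ X a := Set.inter_comm _ _
  rw [PP, PP, MR, hset, hcomm]
  linarith [h']

lemma MR_anti [IsFiniteMeasure μ] (i : Fin t) {Vs Z : Finset (Fin t)} (h : Vs ⊆ Z) :
    MR μ X i Z ≤ MR μ X i Vs := by
  apply ENNReal.toReal_mono (measure_ne_top μ _)
  apply measure_mono
  apply Set.inter_subset_inter_right
  intro x hx
  simp only [Set.mem_iInter] at hx ⊢
  exact fun j hj => hx j (h hj)

end Meas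


set_option maxHeartbeats 1000000 in
theorem main_LLL {Ω : Type*} [MeasurableSpace Ω] (μ : Measure Ω) [IsProbabilityMeasure μ]
    {t : ℕ} (X : Fin t → Set Ω) (hmeas : ∀ i, MeasurableSet (X i))
    (D : SimpleGraph (Fin t)) [DecidableRel D.Adj] (hD : IsNegDepGraph μ X D)
    (W : Fin t → ℝ) (hW : ∀ i, 0 < W i)
    (hXle : ∀ i, (μ (X i)).toReal ≤ W i / phi D W (insert i (D.neighborFinset i))) :
    0 < μ (⋂ i, (X i)ᶜ) := by
  classical
  -- main inductive step
  have body : ∀ Z : Finset (Fin t),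
      (∀ Z' : Finset (Fin t), Z'.card < Z.card → ∀ y, y ∉ Z' →
        MR μ X y Z' ≤ W y / phi D W (insert y (D.neighborFinset y) \ Z') * PP μ X Z') →
      ∀ i, i ∉ Z →
        MR μ X i Z ≤ W i / phi D W (insert i (D.neighborFinset i) \ Z) * PP μ X Z := by
    intro Z IH i _
    set G := insert i (D.neighborFinset i) with hG
    set Vs := Z \ G with hVs
    have hVsub : Vs ⊆ Z := Finset.sdiff_subset
    have hdisj : Disjoint G Vs := by rw [hVs]; exact Finset.disjoint_sdiff
    -- the peeling inequality
    have peel : ∀ T' : Finset (Fin t), T' ⊆ Z ∩ G →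
        phi D W (G \ (T' ∪ Vs)) * PP μ X Vs ≤ phi D W G * PP μ X (T' ∪ Vs) := by
      intro T'
      induction T' using Finset.cons_induction with
      | empty =>
        intro _
        rw [Finset.empty_union, Finset.sdiff_eq_self_iff_disjoint.mpr hdisj]
      | cons a S haS ihp =>
        intro hsub
        obtain ⟨haT, hST⟩ := Finset.cons_subset.mp hsub
        have haZ : a ∈ Z := (Finset.mem_inter.mp haT).1
        have haG : a ∈ G := (Finset.mem_inter.mp haT).2
        have haV : a ∉ Vs := fun h => (Finset.mem_sdiff.mp h).2 haG
        have haSV : a ∉ S ∪ Vs := by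
          simp only [Finset.mem_union]
          push_neg
          exact ⟨haS, haV⟩
        have hSVZ : S ∪ Vs ⊆ Z :=
          Finset.union_subset (fun z hz => (Finset.mem_inter.mp (hST hz)).1) hVsub
        have hSVcard : (S ∪ Vs).card < Z.card := by
          apply Finset.card_lt_card
          rw [Finset.ssubset_def]
          exact ⟨hSVZ, fun h => haSV (h haZ)⟩
        have hclaim := IH (S ∪ Vs) hSVcard a haSV
        set Y := G \ (S ∪ Vs) with hY
        have haY : a ∈ Y := Finset.mem_sdiff.mpr ⟨haG, haSV⟩
        have hdel := phi_del D W haY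
        have hkey : phi D W Y ≤ phi D W (Y \ insert a (D.neighborFinset a)) *
            phi D W (insert a (D.neighborFinset a) \ (S ∪ Vs)) := by
          calc phi D W Y ≤ phi D W (Y \ insert a (D.neighborFinset a)) *
                phi D W (Y ∩ insert a (D.neighborFinset a)) := phi_subadd D W hW _ _
            _ ≤ _ := by
                apply mul_le_mul_of_nonneg_left _ (phi_pos D W hW _).le
                apply phi_mono D W hW
                intro z hz
                obtain ⟨hz1, hz2⟩ := Finset.mem_inter.mp hz
                exact Finset.mem_sdiff.mpr ⟨hz2, (Finset.mem_sdiff.mp hz1).2⟩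
        have hc := phi_pos D W hW (insert a (D.neighborFinset a) \ (S ∪ Vs))
        have h1 : MR μ X a (S ∪ Vs) * phi D W (insert a (D.neighborFinset a) \ (S ∪ Vs))
            ≤ W a * PP μ X (S ∪ Vs) := by
          calc MR μ X a (S ∪ Vs) * phi D W (insert a (D.neighborFinset a) \ (S ∪ Vs))
              ≤ (W a / phi D W (insert a (D.neighborFinset a) \ (S ∪ Vs)) * PP μ X (S ∪ Vs))
                * phi D W (insert a (D.neighborFinset a) \ (S ∪ Vs)) :=
                mul_le_mul_of_nonneg_right hclaim hc.le
            _ = W a * PP μ X (S ∪ Vs) := by field_simp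
        have hcons : Finset.cons a S haS ∪ Vs = insert a (S ∪ Vs) := by
          rw [Finset.cons_eq_insert, Finset.insert_union]
        have hYM : phi D W Y * MR μ X a (S ∪ Vs)
            ≤ W a * phi D W (Y \ insert a (D.neighborFinset a)) * PP μ X (S ∪ Vs) := by
          calc phi D W Y * MR μ X a (S ∪ Vs)
              ≤ (phi D W (Y \ insert a (D.neighborFinset a)) *
                  phi D W (insert a (D.neighborFinset a) \ (S ∪ Vs))) * MR μ X a (S ∪ Vs) :=
                mul_le_mul_of_nonneg_right hkey (MR_nonneg μ X _ _)
            _ = phi D W (Y \ insert a (D.neighborFinset a)) *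
                (MR μ X a (S ∪ Vs) * phi D W (insert a (D.neighborFinset a) \ (S ∪ Vs))) := by
                ring
            _ ≤ phi D W (Y \ insert a (D.neighborFinset a)) * (W a * PP μ X (S ∪ Vs)) :=
                mul_le_mul_of_nonneg_left h1 (phi_pos D W hW _).le
            _ = W a * phi D W (Y \ insert a (D.neighborFinset a)) * PP μ X (S ∪ Vs) := by ring
        have h2 : phi D W (Y.erase a) * PP μ X (S ∪ Vs)
            ≤ phi D W Y * PP μ X (Finset.cons a S haS ∪ Vs) := by
          rw [hcons, PP_insert μ X hmeas a (S ∪ Vs)]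
          have e1 : phi D W (Y.erase a) * PP μ X (S ∪ Vs)
              = phi D W Y * PP μ X (S ∪ Vs)
                - W a * phi D W (Y \ insert a (D.neighborFinset a)) * PP μ X (S ∪ Vs) := by
            rw [hdel]; ring
          rw [e1, mul_sub]
          linarith [hYM]
        have hih := ihp hST
        have hEr : G \ (Finset.cons a S haS ∪ Vs) = Y.erase a := by
          rw [hcons, hY]
          ext z
          simp only [Finset.mem_sdiff, Finset.mem_erase, Finset.mem_insert, Finset.mem_union]
          tauto
        rw [hEr]
        have hYpos := phi_pos D W hW Y
        have hchain : phi D W Y * (phi D W (Y.erase a) * PP μ X Vs)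
            ≤ phi D W Y * (phi D W G * PP μ X (Finset.cons a S haS ∪ Vs)) := by
          calc phi D W Y * (phi D W (Y.erase a) * PP μ X Vs)
              = phi D W (Y.erase a) * (phi D W Y * PP μ X Vs) := by ring
            _ ≤ phi D W (Y.erase a) * (phi D W G * PP μ X (S ∪ Vs)) :=
                mul_le_mul_of_nonneg_left hih (phi_pos D W hW _).le
            _ = phi D W G * (phi D W (Y.erase a) * PP μ X (S ∪ Vs)) := by ring
            _ ≤ phi D W G * (phi D W Y * PP μ X (Finset.cons a S haS ∪ Vs)) :=
                mul_le_mul_of_nonneg_left h2 (phi_pos D W hW _).le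
            _ = phi D W Y * (phi D W G * PP μ X (Finset.cons a S haS ∪ Vs)) := by ring
        exact le_of_mul_le_mul_left hchain hYpos
    -- conclude the inductive step
    have hTV : Z ∩ G ∪ Vs = Z := by
      rw [hVs]
      ext z
      simp only [Finset.mem_union, Finset.mem_inter, Finset.mem_sdiff]
      tauto
    have hpeel := peel (Z ∩ G) Finset.Subset.rfl
    rw [hTV] at hpeel
    have hmr1 : MR μ X i Z ≤ MR μ X i Vs := MR_anti μ X i hVsub
    have hmr2 : MR μ X i Vs ≤ (μ (X i)).toReal * PP μ X Vs := by
      have harg : ∀ j ∈ Vs, j ≠ i ∧ ¬ D.Adj i j := by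
        intro j hj
        have := (Finset.mem_sdiff.mp hj).2
        rw [hG] at this
        simp only [Finset.mem_insert, SimpleGraph.mem_neighborFinset] at this
        push_neg at this
        exact this
      have := hD i Vs harg
      have h' := ENNReal.toReal_mono
        (ENNReal.mul_ne_top (measure_ne_top μ _) (measure_ne_top μ _)) this
      rwa [ENNReal.toReal_mul] at h'
    have hmr3 := hXle i
    have hGZpos := phi_pos D W hW (G \ Z)
    have hGpos := phi_pos D W hW G
    rw [div_mul_eq_mul_div, le_div_iff₀ hGZpos]
    calc MR μ X i Z * phi D W (G \ Z)
        ≤ ((W i / phi D W G) * PP μ X Vs) * phi D W (G \ Z) := by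
          apply mul_le_mul_of_nonneg_right _ (phi_pos D W hW _).le
          calc MR μ X i Z ≤ MR μ X i Vs := hmr1
            _ ≤ (μ (X i)).toReal * PP μ X Vs := hmr2
            _ ≤ (W i / phi D W G) * PP μ X Vs :=
                mul_le_mul_of_nonneg_right hmr3 (PP_nonneg μ X _)
      _ = (W i / phi D W G) * (phi D W (G \ Z) * PP μ X Vs) := by ring
      _ ≤ (W i / phi D W G) * (phi D W G * PP μ X Z) := by
          exact mul_le_mul_of_nonneg_left hpeel
            (div_nonneg (hW i).le hGpos.le)
      _ = W i * PP μ X Z := by field_simp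
  -- the claim, by strong induction on the size of `Z`
  have key : ∀ n : ℕ, ∀ Z : Finset (Fin t), Z.card ≤ n → ∀ i, i ∉ Z →
      MR μ X i Z ≤ W i / phi D W (insert i (D.neighborFinset i) \ Z) * PP μ X Z := by
    intro n
    induction n with
    | zero =>
      intro Z hZ i hi
      exact body Z (fun Z' h => absurd (lt_of_lt_of_le h hZ) (Nat.not_lt_zero _)) i hi
    | succ n ih =>
      intro Z hZ i hi
      exact body Z (fun Z' h y hy => ih Z' (by omega) y hy) i hi
  -- lower bound on the probability that nothing in `Z` occurs
  have final : ∀ Z : Finset (Fin t), ∏ i ∈ Z, (1 + W i)⁻¹ ≤ PP μ X Z := by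
    intro Z
    induction Z using Finset.cons_induction with
    | empty =>
      have : ⋂ j ∈ (∅ : Finset (Fin t)), (X j)ᶜ = Set.univ := by simp
      rw [Finset.prod_empty, PP, this, measure_univ, ENNReal.toReal_one]
    | cons a S haS ih =>
      have hclaim := key S.card S le_rfl a haS
      have hmem : a ∈ insert a (D.neighborFinset a) \ S :=
        Finset.mem_sdiff.mpr ⟨Finset.mem_insert_self _ _, haS⟩
      have hphi := add_le_phi D W hW hmem
      have hwa := hW a
      have hbound : W a / phi D W (insert a (D.neighborFinset a) \ S) ≤ W a / (1 + W a) := by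
        apply div_le_div_of_nonneg_left hwa.le (by linarith) hphi
      have hmr : MR μ X a S ≤ W a / (1 + W a) * PP μ X S :=
        hclaim.trans (mul_le_mul_of_nonneg_right hbound (PP_nonneg μ X S))
      have hPP : (1 + W a)⁻¹ * PP μ X S ≤ PP μ X (Finset.cons a S haS) := by
        rw [Finset.cons_eq_insert, PP_insert μ X hmeas a S]
        have : (1 + W a)⁻¹ * PP μ X S = PP μ X S - W a / (1 + W a) * PP μ X S := by
          field_simp
          ring
        rw [this]
        linarith [hmr]
      calc ∏ i ∈ Finset.cons a S haS, (1 + W i)⁻¹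
          = (1 + W a)⁻¹ * ∏ i ∈ S, (1 + W i)⁻¹ := Finset.prod_cons haS
        _ ≤ (1 + W a)⁻¹ * PP μ X S := by
            apply mul_le_mul_of_nonneg_left ih
            positivity
        _ ≤ _ := hPP
  have hpos : 0 < PP μ X Finset.univ := by
    refine lt_of_lt_of_le ?_ (final Finset.univ)
    apply Finset.prod_pos
    intro i _
    have := hW i
    positivity
  have hset : ⋂ j ∈ (Finset.univ : Finset (Fin t)), (X j)ᶜ = ⋂ i, (X i)ᶜ := by
    ext x
    simp
  rw [PP, hset] at hpos
  exact (ENNReal.toReal_pos_iff.mp hpos).1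


/-- **Remark after Lemma 10, second part** (condition (4')): the events are partitioned
into two types (given by `typ`); for an event `X i` of type `s = typ i` its closed
neighbourhood in the negative dependency graph `D` is a union over `j ∈ [ℓ s]` of sets
`Q i j 0 ∪ Q i j 1`, where `Q i j s'` consists of events of type `s'`, has size at most
`q s j s'`, and each `Q i j 0 ∪ Q i j 1` is a clique in `D`.  If there are `w 0, w 1 > 0`
with `P(X i) ≤ w (typ i) / Π_j (1 + w 0 · q (typ i) j 0 + w 1 · q (typ i) j 1)` for all `i`,
then with positive probability no event occurs. -/
theorem cluster_expansion_local_lemma_two_types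
    {Ω : Type*} [MeasurableSpace Ω] (μ : Measure Ω) [IsProbabilityMeasure μ]
    {t : ℕ} (X : Fin t → Set Ω) (hmeas : ∀ i, MeasurableSet (X i))
    (D : SimpleGraph (Fin t)) [DecidableRel D.Adj]
    (hD : IsNegDepGraph μ X D)
    (typ : Fin t → Fin 2)
    (ℓ : Fin 2 → ℕ)
    (q : (s : Fin 2) → Fin (ℓ s) → Fin 2 → ℕ) (hq : ∀ s j s', 0 < q s j s')
    (Q : (i : Fin t) → Fin (ℓ (typ i)) → Fin 2 → Finset (Fin t))
    (htype : ∀ i j s', ∀ m ∈ Q i j s', typ m = s')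
    (hcard : ∀ i j s', (Q i j s').card ≤ q (typ i) j s')
    (hcover : ∀ i, insert i (D.neighborFinset i) =
      Finset.univ.biUnion (fun j => Q i j 0 ∪ Q i j 1))
    (hclique : ∀ i j, D.IsClique ((Q i j 0 ∪ Q i j 1 : Finset (Fin t)) : Set (Fin t)))
    (w : Fin 2 → ℝ) (hw : ∀ s, 0 < w s)
    (hP : ∀ i, μ (X i) ≤ ENNReal.ofReal (w (typ i) /
      ∏ j : Fin (ℓ (typ i)), (1 + w 0 * q (typ i) j 0 + w 1 * q (typ i) j 1))) :
    0 < μ (⋂ i, (X i)ᶜ) := by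
  classical
  apply main_LLL μ X hmeas D hD (fun i => w (typ i)) (fun i => hw (typ i))
  intro i
  set W : Fin t → ℝ := fun i => w (typ i) with hWdef
  have hW : ∀ i, 0 < W i := fun i => hw (typ i)
  set Pi : ℝ := ∏ j : Fin (ℓ (typ i)), (1 + w 0 * q (typ i) j 0 + w 1 * q (typ i) j 1)
    with hPi
  have hPipos : 0 < Pi := by
    apply Finset.prod_pos
    intro j _
    have h0 := hw 0
    have h1 := hw 1
    positivity
  have hsum : ∀ j (s' : Fin 2), ∑ y ∈ Q i j s', W y ≤ w s' * q (typ i) j s' := by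
    intro j s'
    calc ∑ y ∈ Q i j s', W y = ∑ y ∈ Q i j s', w s' :=
          Finset.sum_congr rfl (fun m hm => by rw [hWdef]; simp only; rw [htype i j s' m hm])
      _ = (Q i j s').card * w s' := by rw [Finset.sum_const, nsmul_eq_mul]
      _ ≤ (q (typ i) j s' : ℝ) * w s' :=
          mul_le_mul_of_nonneg_right (Nat.cast_le.mpr (hcard i j s')) (hw s').le
      _ = w s' * q (typ i) j s' := mul_comm _ _
  have hphile : phi D W (insert i (D.neighborFinset i)) ≤ Pi := by
    rw [hcover i, hPi]
    calc phi D W (Finset.univ.biUnion fun j => Q i j 0 ∪ Q i j 1)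
        ≤ ∏ j : Fin (ℓ (typ i)), phi D W (Q i j 0 ∪ Q i j 1) :=
          phi_biUnion D W hW Finset.univ _
      _ ≤ ∏ j : Fin (ℓ (typ i)), (1 + w 0 * q (typ i) j 0 + w 1 * q (typ i) j 1) := by
          apply Finset.prod_le_prod (fun j _ => (phi_pos D W hW _).le)
          intro j _
          have hcl := phi_clique D W hW (hclique i j)
          have hspl : ∑ y ∈ Q i j 0 ∪ Q i j 1, W y
              ≤ (∑ y ∈ Q i j 0, W y) + ∑ y ∈ Q i j 1, W y := by
            rw [← Finset.union_sdiff_self_eq_union,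
              Finset.sum_union Finset.disjoint_sdiff]
            have : ∑ y ∈ Q i j 1 \ Q i j 0, W y ≤ ∑ y ∈ Q i j 1, W y :=
              Finset.sum_le_sum_of_subset_of_nonneg Finset.sdiff_subset
                (fun y _ _ => (hW y).le)
            linarith
          have h0 := hsum j 0
          have h1 := hsum j 1
          linarith
  have h0 : (μ (X i)).toReal ≤ w (typ i) / Pi := by
    have := ENNReal.toReal_mono ENNReal.ofReal_ne_top (hP i)
    rwa [ENNReal.toReal_ofReal (div_nonneg (hw (typ i)).le hPipos.le)] at this
  exact h0.trans (div_le_div_of_nonneg_left (hw (typ i)).le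
    (phi_pos D W hW _) hphile)
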